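/- Let 0 < b < 1 and for k ∈ ℕ define φ^(k) : ℤ≥1 → ℝ by φ^(k)_n = (1−b²) √((k+1)/b^{2(k+1)}) · M_k(n), where M_k(n) = Σ_{s=0}^{k} (−1)^s C(k,s) ((n+1)(n+2)⋯(n+s)/(s+1)!) (1−b²)^s. Then for all k, h ∈ ℕ the series Σ_{n=1}^∞ n b^{2n} φ^(k)_n φ^(h)_n converges and equals δ_{kh}. -/

import Mathlib

/-- The Meixner polynomial (up to normalization): the terminating hypergeometric sum
`M_k(n) = ₂F₁(−k, n+1; 2; 1−b²)
       = Σ_{s=0}^{k} (−1)^s C(k,s) ((n+1)(n+2)⋯(n+s)/(s+1)!) (1−b²)^s`. -/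
noncomputable def meixner (b : ℝ) (k n : ℕ) : ℝ :=
  ∑ s ∈ Finset.range (k + 1),
    (-1) ^ s * (k.choose s : ℝ) * ((∏ t ∈ Finset.Icc 1 s, ((n : ℝ) + t)) /
      ((s + 1).factorial : ℝ)) * (1 - b ^ 2) ^ s

/-- The normalized Meixner eigenvectors of Appendix 1:
`φ^(k)_n = (1−b²) √((k+1)/b^{2(k+1)}) M_k(n)`. -/
noncomputable def meixnerNorm (b : ℝ) (k n : ℕ) : ℝ :=
  (1 - b ^ 2) * Real.sqrt ((k + 1) / b ^ (2 * (k + 1))) * meixner b k n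

namespace MeixnerAux

/-- cast lemma: `C(s,m+1)*(m+1) = C(s,m)*(s-m)` over ℝ. -/
lemma choose_succ_real (s m : ℕ) :
    ((s.choose (m+1) : ℝ)) * (m+1) = (s.choose m : ℝ) * ((s:ℝ) - m) := by
  rcases le_or_gt m s with hms | hms
  · have := Nat.choose_succ_right_eq s m
    have h' : ((s.choose (m+1) * (m+1) : ℕ) : ℝ) = ((s.choose m * (s - m) : ℕ) : ℝ) := by
      exact_mod_cast congrArg (Nat.cast (R := ℝ)) this
    push_cast [Nat.cast_sub hms] at h'
    linarith [h']
  · rw [Nat.choose_eq_zero_of_lt hms, Nat.choose_eq_zero_of_lt (by omega)]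
    simp

/-- Product formula: `∏_{t=1}^s (n+t) = s! * C(n+s, s)` over ℝ. -/
lemma prod_Icc_eq (s n : ℕ) :
    (∏ t ∈ Finset.Icc 1 s, ((n : ℝ) + t)) = (s.factorial : ℝ) * ((n + s).choose s : ℝ) := by
  induction s with
  | zero => simp
  | succ s ih =>
      rw [Finset.prod_Icc_succ_top (by omega), ih]
      have key : (n + s + 1) * (n + s).choose s = (n + s + 1).choose (s + 1) * (s + 1) :=
        Nat.add_one_mul_choose_eq (n + s) s
      have keyR : ((n:ℝ) + s + 1) * ((n + s).choose s : ℝ)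
          = ((n + s + 1).choose (s + 1) : ℝ) * (s + 1) := by exact_mod_cast key
      have e : n + (s+1) = n + s + 1 := by omega
      rw [e]
      push_cast [Nat.factorial_succ]
      push_cast at keyR
      linear_combination (s.factorial : ℝ) * keyR

/-- `n * ∏_{t=1}^s (n+t) = (s+1)! * C(n+s, s+1)` over ℝ. -/
lemma mul_prod_Icc_eq (s n : ℕ) :
    (n : ℝ) * (∏ t ∈ Finset.Icc 1 s, ((n : ℝ) + t))
      = ((s+1).factorial : ℝ) * ((n + s).choose (s+1) : ℝ) := by
  rw [prod_Icc_eq]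
  have key : (n + s).choose (s+1) * (s+1) = (n + s).choose s * n := by
    have := Nat.choose_succ_right_eq (n + s) s
    simpa using this
  have keyR : ((n + s).choose (s+1) : ℝ) * (s+1) = ((n + s).choose s : ℝ) * n := by
    exact_mod_cast key
  push_cast [Nat.factorial_succ]
  push_cast at keyR
  linear_combination -keyR * (s.factorial : ℝ)


/-- Lemma B -/
lemma prod_shift_eq (s n : ℕ) : ∀ i : ℕ,
    ((s+1).factorial : ℝ) * ((n + s).choose (s+1) : ℝ)
        * (∏ t ∈ Finset.Icc (s+1) (s+i), ((n : ℝ) + t))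
      = ((s+i+1).factorial : ℝ) * ((n + s + i).choose (s+i+1) : ℝ) := by
  intro i
  induction i with
  | zero => simp
  | succ i ih =>
      have e : s + (i+1) = (s + i) + 1 := by omega
      rw [e, Finset.prod_Icc_succ_top (by omega), ← mul_assoc, ih]
      have keyR : ((n:ℝ) + s + i + 1) * ((n + s + i).choose (s + i + 1) : ℝ)
          = ((n + s + i + 1).choose (s + i + 2) : ℝ) * ((s:ℝ) + i + 2) := by
        exact_mod_cast Nat.add_one_mul_choose_eq (n + s + i) (s + i + 1)
      have e2 : n + s + (i + 1) = n + s + i + 1 := by omega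
      have e3 : s + i + 1 + 1 = s + i + 2 := by omega
      have e4 : ((s+i+2).factorial : ℝ) = ((s:ℝ)+i+2) * ((s+i+1).factorial : ℝ) := by
        have : (s+i+2).factorial = (s+i+2) * (s+i+1).factorial := Nat.factorial_succ _
        push_cast [this]; ring
      rw [e2, e3, e4]
      push_cast
      linear_combination ((s+i+1).factorial : ℝ) * keyR

/-- connection coefficient -/
noncomputable def gam (s s' i : ℕ) : ℝ :=
  (-1) ^ (s' - i) * ((s'.factorial : ℝ) / (i.factorial : ℝ)) * (s.choose (s' - i) : ℝ)

lemma gam_rec (s s' : ℕ) : ∀ j ∈ Finset.range (s'+2),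
    gam s (s'+1) j = (if 1 ≤ j then gam s s' (j-1) else 0)
      + (if j ≤ s' then ((s':ℝ) - s - j) * gam s s' j else 0) := by
  intro j hj
  rw [Finset.mem_range] at hj
  rcases Nat.eq_zero_or_pos j with rfl | hj1
  · rw [if_neg (by omega : ¬ (1:ℕ) ≤ 0), if_pos (Nat.zero_le s')]
    simp only [gam, Nat.sub_zero]
    have CL := choose_succ_real s s'
    push_cast [Nat.factorial_succ]
    simp only [Nat.factorial_zero]
    field_simp
    ring_nf
    ring_nf at CL
    linear_combination ((-1:ℝ))^(s'+1) * (s'.factorial : ℝ) * CL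
  rcases eq_or_lt_of_le (show j ≤ s' + 1 by omega) with rfl | hj2
  · rw [if_pos (by omega : 1 ≤ s'+1), if_neg (by omega : ¬ s'+1 ≤ s')]
    simp only [gam, Nat.sub_self]
    have h1 : s' + 1 - 1 = s' := by omega
    rw [h1, Nat.sub_self]
    have f1 : ((s'+1).factorial : ℝ) ≠ 0 := by positivity
    have f2 : ((s').factorial : ℝ) ≠ 0 := by positivity
    field_simp
    simp
  · -- 1 ≤ j ≤ s'
    have hjs : j ≤ s' := by omega
    rw [if_pos (by omega : 1 ≤ j), if_pos hjs]
    set m := s' - j with hm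
    have e1 : s' + 1 - j = m + 1 := by omega
    have e2 : s' - (j - 1) = m + 1 := by omega
    have hs'm : (s' : ℝ) = (m : ℝ) + j := by
      have : s' = m + j := by omega
      exact_mod_cast congrArg (Nat.cast (R := ℝ)) this
    simp only [gam, e1, e2, ← hm]
    have CL := choose_succ_real s m
    have hfs : ((s'+1).factorial : ℝ) = ((s':ℝ)+1) * (s'.factorial : ℝ) := by
      have : (s'+1).factorial = (s'+1) * s'.factorial := Nat.factorial_succ _
      push_cast [this]; ring
    have hfj : (j.factorial : ℝ) = (j:ℝ) * ((j-1).factorial : ℝ) := by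
      have h : j.factorial = j * (j-1).factorial := by
        conv_lhs => rw [show j = (j-1)+1 by omega]
        rw [Nat.factorial_succ]
        congr 1; omega
      push_cast [h]; ring
    have f1 : ((j-1).factorial : ℝ) ≠ 0 := by positivity
    have f2 : (j : ℝ) ≠ 0 := Nat.cast_ne_zero.mpr (by omega)
    rw [hfs, hfj, hs'm]
    field_simp
    linear_combination -(-(1:ℝ))^m * CL


/-- Lemma C: connection formula -/
lemma connection (s n : ℕ) : ∀ s' : ℕ,
    (∏ t ∈ Finset.Icc 1 s', ((n : ℝ) + t))
      = ∑ i ∈ Finset.range (s'+1), gam s s' i * (∏ t ∈ Finset.Icc (s+1) (s+i), ((n : ℝ) + t)) := by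
  intro s'
  induction s' with
  | zero => simp [gam]
  | succ s' ih =>
      rw [Finset.prod_Icc_succ_top (by omega), ih, Finset.sum_mul]
      have hsplit : ∀ i ∈ Finset.range (s'+1),
          gam s s' i * (∏ t ∈ Finset.Icc (s+1) (s+i), ((n : ℝ) + t)) * ((n:ℝ) + ((s':ℕ)+1 : ℕ))
            = gam s s' i * (∏ t ∈ Finset.Icc (s+1) (s+(i+1)), ((n : ℝ) + t))
              + (((s':ℝ) - s - i) * gam s s' i)
                * (∏ t ∈ Finset.Icc (s+1) (s+i), ((n : ℝ) + t)) := by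
        intro i _
        have e : s + (i+1) = (s+i) + 1 := by omega
        rw [e, Finset.prod_Icc_succ_top (by omega)]
        push_cast
        ring
      rw [Finset.sum_congr rfl hsplit, Finset.sum_add_distrib]
      -- first sum: over range(s'+1) of gam s s' i * P_{i+1}  = sum over range(s'+2) of ite (1≤j) (gam s s' (j-1) * P_j) 0
      have h1 : (∑ i ∈ Finset.range (s'+1),
            gam s s' i * (∏ t ∈ Finset.Icc (s+1) (s+(i+1)), ((n : ℝ) + t)))
          = ∑ j ∈ Finset.range (s'+2),
            (if 1 ≤ j then gam s s' (j-1) else 0) * (∏ t ∈ Finset.Icc (s+1) (s+j), ((n : ℝ) + t)) := by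
        rw [Finset.sum_range_succ' (fun j => (if 1 ≤ j then gam s s' (j-1) else 0)
            * (∏ t ∈ Finset.Icc (s+1) (s+j), ((n : ℝ) + t))) (s'+1)]
        simp only [if_neg (by omega : ¬ (1:ℕ) ≤ 0), zero_mul, add_zero]
        apply Finset.sum_congr rfl
        intro i _
        rw [if_pos (by omega : 1 ≤ i + 1)]
        simp
      have h2 : (∑ i ∈ Finset.range (s'+1),
            (((s':ℝ) - s - i) * gam s s' i) * (∏ t ∈ Finset.Icc (s+1) (s+i), ((n : ℝ) + t)))
          = ∑ j ∈ Finset.range (s'+2),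
            (if j ≤ s' then ((s':ℝ) - s - j) * gam s s' j else 0)
              * (∏ t ∈ Finset.Icc (s+1) (s+j), ((n : ℝ) + t)) := by
        rw [Finset.sum_range_succ (fun j => (if j ≤ s' then ((s':ℝ) - s - j) * gam s s' j else 0)
            * (∏ t ∈ Finset.Icc (s+1) (s+j), ((n : ℝ) + t))) (s'+1)]
        rw [if_neg (by omega : ¬ s'+1 ≤ s'), zero_mul, add_zero]
        apply Finset.sum_congr rfl
        intro i hi
        rw [Finset.mem_range] at hi
        rw [if_pos (by omega : i ≤ s')]
      rw [h1, h2, ← Finset.sum_add_distrib]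
      apply Finset.sum_congr rfl
      intro j hj
      rw [gam_rec s s' j hj]
      ring

/-- alternating kill lemma -/
lemma altkill : ∀ K c i : ℕ,
    (∑ u ∈ Finset.range (K+1), (-1:ℝ)^u * (K.choose u : ℝ) * ((u+c).choose i : ℝ))
      = if K ≤ i then (-1:ℝ)^K * (c.choose (i-K) : ℝ) else 0 := by
  intro K
  induction K with
  | zero => intro c i; simp
  | succ K ih =>
      intro c i
      have expand : (∑ u ∈ Finset.range (K+2), (-1:ℝ)^u * ((K+1).choose u : ℝ) * ((u+c).choose i : ℝ))
          = (∑ u ∈ Finset.range (K+1), (-1:ℝ)^u * (K.choose u : ℝ) * ((u+c).choose i : ℝ))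
            - (∑ u ∈ Finset.range (K+1), (-1:ℝ)^u * (K.choose u : ℝ) * ((u+(c+1)).choose i : ℝ)) := by
        rw [Finset.sum_range_succ' (fun u => (-1:ℝ)^u * ((K+1).choose u : ℝ) * ((u+c).choose i : ℝ)) (K+1)]
        have e1 : ∀ u ∈ Finset.range (K+1),
            ((-1:ℝ))^(u+1) * (((K+1).choose (u+1) : ℝ)) * (((u+1+c).choose i : ℝ))
            = -((-1:ℝ)^u * (K.choose u : ℝ) * ((u+(c+1)).choose i : ℝ))
              + ((-1:ℝ))^(u+1) * (K.choose (u+1) : ℝ) * (((u+1+c).choose i : ℝ)) := by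
          intro u _
          have e : u + 1 + c = u + (c+1) := by omega
          have hcc : (((K+1).choose (u+1) : ℝ)) = (K.choose u : ℝ) + (K.choose (u+1) : ℝ) := by
            exact_mod_cast congrArg (Nat.cast (R := ℝ)) (Nat.choose_succ_succ K u)
          rw [e, hcc]; ring
        rw [Finset.sum_congr rfl e1, Finset.sum_add_distrib]
        have h3 : (∑ u ∈ Finset.range (K+1), ((-1:ℝ))^(u+1) * (K.choose (u+1) : ℝ) * (((u+1+c).choose i : ℝ)))
            = (∑ u ∈ Finset.range (K+2), ((-1:ℝ))^u * (K.choose u : ℝ) * (((u+c).choose i : ℝ)))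
              - ((c).choose i : ℝ) := by
          rw [Finset.sum_range_succ' (fun u => ((-1:ℝ))^u * (K.choose u : ℝ) * (((u+c).choose i : ℝ))) (K+1)]
          simp
        rw [h3, Finset.sum_range_succ (fun u => ((-1:ℝ))^u * (K.choose u : ℝ) * (((u+c).choose i : ℝ))) (K+1)]
        simp only [Nat.choose_succ_self, Nat.cast_zero]
        push_cast
        have hsn : (∑ u ∈ Finset.range (K+1), -((-1:ℝ)^u * (K.choose u : ℝ) * ((u+(c+1)).choose i : ℝ)))
            = -(∑ u ∈ Finset.range (K+1), ((-1:ℝ)^u * (K.choose u : ℝ) * ((u+(c+1)).choose i : ℝ))) := by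
          rw [Finset.sum_neg_distrib]
        rw [hsn]
        simp only [Nat.choose_zero_right, Nat.cast_one, zero_add, one_mul]
        ring
      rw [expand, ih c i, ih (c+1) i]
      rcases le_or_gt (K+1) i with hKi | hKi
      · simp only [if_pos (show K ≤ i by omega), if_pos (show K+1 ≤ i from hKi)]
        have e : i - K = (i - (K+1)) + 1 := by omega
        rw [e]
        have hcc : ((c+1).choose ((i-(K+1))+1) : ℝ)
            = (c.choose (i-(K+1)) : ℝ) + (c.choose ((i-(K+1))+1) : ℝ) := by
          exact_mod_cast congrArg (Nat.cast (R := ℝ)) (Nat.choose_succ_succ c (i-(K+1)))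
        rw [hcc]
        ring
      · have hne : ¬ (K+1 ≤ i) := by omega
        rcases eq_or_lt_of_le (show i ≤ K by omega) with rfl | hlt
        · simp only [if_pos (le_refl i), if_neg hne, Nat.sub_self]
          simp
        · simp only [if_neg (show ¬ K ≤ i by omega), if_neg hne]
          ring

/-- Lemma E: the inner alternating sum over `s`. -/
lemma sumE (k m i : ℕ) :
    (∑ s ∈ Finset.range (k+1),
      (-1:ℝ)^s * (k.choose s : ℝ) * (s.choose m : ℝ) * ((s+i+1).choose i : ℝ))
    = if k ≤ m + i then (-1:ℝ)^k * (k.choose m : ℝ) * ((m+i+1).choose (m+i-k) : ℝ) else 0 := by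
  rcases lt_or_ge k m with hkm | hkm
  · rw [Finset.sum_eq_zero, eq_comm]
    · split_ifs <;> simp [Nat.choose_eq_zero_of_lt hkm]
    · intro s hs
      rw [Finset.mem_range] at hs
      rw [Nat.choose_eq_zero_of_lt (show s < m by omega)]
      simp
  · -- m ≤ k
    have h1 : (∑ s ∈ Finset.range (k+1),
          (-1:ℝ)^s * (k.choose s : ℝ) * (s.choose m : ℝ) * ((s+i+1).choose i : ℝ))
        = ∑ s ∈ Finset.Ico m (k+1),
          (-1:ℝ)^s * (k.choose s : ℝ) * (s.choose m : ℝ) * ((s+i+1).choose i : ℝ) := by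
      refine (Finset.sum_subset ?_ ?_).symm
      · intro s hs; rw [Finset.mem_Ico] at hs; rw [Finset.mem_range]; omega
      · intro s hs hns
        rw [Finset.mem_range] at hs; rw [Finset.mem_Ico] at hns
        rw [Nat.choose_eq_zero_of_lt (show s < m by omega)]
        simp
    rw [h1, Finset.sum_Ico_eq_sum_range]
    have h2 : k + 1 - m = (k - m) + 1 := by omega
    rw [h2]
    have h3 : ∀ u ∈ Finset.range ((k-m)+1),
        (-1:ℝ)^(m+u) * (k.choose (m+u) : ℝ) * ((m+u).choose m : ℝ) * (((m+u)+i+1).choose i : ℝ)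
        = ((-1:ℝ)^m * (k.choose m : ℝ)) *
            ((-1:ℝ)^u * ((k-m).choose u : ℝ) * ((u+(m+i+1)).choose i : ℝ)) := by
      intro u hu
      rw [Finset.mem_range] at hu
      have hmul : k.choose (m+u) * (m+u).choose m = k.choose m * (k-m).choose u := by
        have := Nat.choose_mul (n := k) (show m ≤ m+u by omega)
        simpa [Nat.add_sub_cancel_left] using this
      have hmulR : (k.choose (m+u) : ℝ) * ((m+u).choose m : ℝ)
          = (k.choose m : ℝ) * ((k-m).choose u : ℝ) := by exact_mod_cast hmul
      have e : (m+u)+i+1 = u+(m+i+1) := by omega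
      rw [e, pow_add]
      linear_combination ((-1:ℝ)^m * (-1:ℝ)^u * ((u+(m+i+1)).choose i : ℝ)) * hmulR
    rw [Finset.sum_congr rfl h3, ← Finset.mul_sum, altkill (k-m) (m+i+1) i]
    rcases le_or_gt k (m+i) with hki | hki
    · rw [if_pos (show k - m ≤ i by omega), if_pos hki]
      have e1 : i - (k-m) = m + i - k := by omega
      have e2 : (-1:ℝ)^m * (-1:ℝ)^(k-m) = (-1:ℝ)^k := by
        rw [← pow_add]; congr 1; omega
      rw [e1]
      calc ((-1:ℝ)^m * (k.choose m : ℝ)) * ((-1:ℝ)^(k-m) * ((m+i+1).choose (m+i-k) : ℝ))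
          = ((-1:ℝ)^m * (-1:ℝ)^(k-m)) * (k.choose m : ℝ) * ((m+i+1).choose (m+i-k) : ℝ) := by ring
        _ = _ := by rw [e2]
    · rw [if_neg (show ¬ (k - m ≤ i) by omega), if_neg (show ¬ (k ≤ m+i) by omega)]
      ring

/-- truncated binomial theorem -/
lemma binomtrunc (x : ℝ) (k s' : ℕ) (h : k ≤ s') :
    (∑ v ∈ Finset.range (s'+1), (-1:ℝ)^v * (k.choose v : ℝ) * x^v) = (1-x)^k := by
  have h1 : (∑ v ∈ Finset.range (s'+1), (-1:ℝ)^v * (k.choose v : ℝ) * x^v)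
      = ∑ v ∈ Finset.range (k+1), (-1:ℝ)^v * (k.choose v : ℝ) * x^v := by
    refine (Finset.sum_subset ?_ ?_).symm
    · intro v hv; rw [Finset.mem_range] at hv ⊢; omega
    · intro v hv hnv
      rw [Finset.mem_range] at hv hnv
      rw [Nat.choose_eq_zero_of_lt (show k < v by omega)]
      simp
  rw [h1]
  have := add_pow (-x) 1 k
  rw [show -x + 1 = 1 - x by ring] at this
  rw [this]
  apply Finset.sum_congr rfl
  intro v _
  rw [neg_pow]
  ring

/-- alternating sum of binomial coefficients -/
lemma altsum (N : ℕ) :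
    (∑ w ∈ Finset.range (N+1), (-1:ℝ)^w * (N.choose w : ℝ)) = if N = 0 then 1 else 0 := by
  have := add_pow (-1 : ℝ) 1 N
  rw [show (-1 : ℝ) + 1 = 0 by ring, zero_pow_eq] at this
  rw [this]
  apply Finset.sum_congr rfl
  intro v _
  simp

/-- Lemma H: the final alternating sum over `s'`. -/
lemma sumH (k h : ℕ) :
    (∑ s' ∈ Finset.range (h+1), (if k ≤ s' then
        (-1:ℝ)^s' * (h.choose s' : ℝ) * ((s'+1).choose (s'-k) : ℝ) * ((s':ℝ)+1)⁻¹ else 0))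
    = if k = h then (-1:ℝ)^k * ((k:ℝ)+1)⁻¹ else 0 := by
  rcases lt_or_ge h k with hhk | hkh
  · rw [Finset.sum_eq_zero, if_neg (by omega)]
    intro s' hs'
    rw [Finset.mem_range] at hs'
    rw [if_neg (by omega)]
  · -- k ≤ h
    have h1 : (∑ s' ∈ Finset.range (h+1), (if k ≤ s' then
          (-1:ℝ)^s' * (h.choose s' : ℝ) * ((s'+1).choose (s'-k) : ℝ) * ((s':ℝ)+1)⁻¹ else 0))
        = ∑ s' ∈ Finset.Ico k (h+1),
          (-1:ℝ)^s' * (h.choose s' : ℝ) * ((s'+1).choose (s'-k) : ℝ) * ((s':ℝ)+1)⁻¹ := by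
      refine (Finset.sum_subset ?_ ?_).symm.trans (Finset.sum_congr rfl ?_)
      · intro s' hs'; rw [Finset.mem_Ico] at hs'; rw [Finset.mem_range]; omega
      · intro s' hs' hns'
        rw [Finset.mem_range] at hs'; rw [Finset.mem_Ico] at hns'
        rw [if_neg (by omega)]
      · intro s' hs'; rw [Finset.mem_Ico] at hs'
        rw [if_pos (by omega)]
    rw [h1]
    have h2 : ∀ s' ∈ Finset.Ico k (h+1),
        (-1:ℝ)^s' * (h.choose s' : ℝ) * ((s'+1).choose (s'-k) : ℝ) * ((s':ℝ)+1)⁻¹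
        = ((h+1).choose (k+1) : ℝ) * ((h:ℝ)+1)⁻¹ * ((-1:ℝ)^s' * ((h-k).choose (s'-k) : ℝ)) := by
      intro s' hs'
      rw [Finset.mem_Ico] at hs'
      have hks' : k ≤ s' := hs'.1
      have hs'h : s' ≤ h := by omega
      have hsymm : (s'+1).choose (s'-k) = (s'+1).choose (k+1) := by
        rw [show s' - k = (s'+1) - (k+1) by omega]
        exact Nat.choose_symm (by omega)
      have hmul : (h+1).choose (s'+1) * (s'+1).choose (k+1)
          = (h+1).choose (k+1) * ((h-k)).choose (s'-k) := by
        have := Nat.choose_mul (n := h+1) (show k+1 ≤ s'+1 by omega)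
        have e1 : h + 1 - (k+1) = h - k := by omega
        have e2 : s' + 1 - (k+1) = s' - k := by omega
        rwa [e1, e2] at this
      have hsucc : (h+1) * h.choose s' = (h+1).choose (s'+1) * (s'+1) :=
        Nat.add_one_mul_choose_eq h s'
      have hsuccR : ((h:ℝ)+1) * (h.choose s' : ℝ) = ((h+1).choose (s'+1) : ℝ) * ((s':ℝ)+1) := by
        exact_mod_cast hsucc
      have hmulR : ((h+1).choose (s'+1) : ℝ) * ((s'+1).choose (k+1) : ℝ)
          = ((h+1).choose (k+1) : ℝ) * (((h-k)).choose (s'-k) : ℝ) := by exact_mod_cast hmul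
      have hne1 : ((s':ℝ)+1) ≠ 0 := by positivity
      have hne2 : ((h:ℝ)+1) ≠ 0 := by positivity
      have key : (h.choose s' : ℝ) * ((s'+1).choose (k+1) : ℝ) * ((h:ℝ)+1)
          = ((h+1).choose (k+1) : ℝ) * (((h-k)).choose (s'-k) : ℝ) * ((s':ℝ)+1) := by
        linear_combination ((s'+1).choose (k+1) : ℝ) * hsuccR + ((s':ℝ)+1) * hmulR
      rw [hsymm]
      field_simp
      linear_combination key
    rw [Finset.sum_congr rfl h2, ← Finset.mul_sum, Finset.sum_Ico_eq_sum_range]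
    have h3 : h + 1 - k = (h-k) + 1 := by omega
    rw [h3]
    have h4 : ∀ w ∈ Finset.range ((h-k)+1),
        (-1:ℝ)^(k+w) * (((h-k)).choose ((k+w)-k) : ℝ)
        = (-1:ℝ)^k * ((-1:ℝ)^w * (((h-k)).choose w : ℝ)) := by
      intro w _
      rw [show (k+w)-k = w by omega, pow_add]
      ring
    rw [Finset.sum_congr rfl h4, ← Finset.mul_sum, altsum (h-k)]
    rcases eq_or_lt_of_le hkh with rfl | hlt
    · rw [if_pos rfl, if_pos (by omega : k - k = 0)]
      rw [Nat.choose_self]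
      push_cast
      ring
    · rw [if_neg (by omega), if_neg (by omega)]
      ring


/-- the coefficient appearing in the expansion of the series -/
noncomputable def coef (x : ℝ) (k h s s' i : ℕ) : ℝ :=
  ((-1)^s * (k.choose s : ℝ) * x^s) * ((-1)^s' * (h.choose s' : ℝ) * x^s')
    * gam s s' i * (((s+i+1).factorial : ℝ) / (((s'+1).factorial : ℝ) * ((s+1).factorial : ℝ)))

/-- evaluation of the triple sum -/
lemma Teval (q : ℝ) (hq0 : 0 < q) (hq1 : q < 1) (k h : ℕ) :
    (∑ s ∈ Finset.range (k+1), ∑ s' ∈ Finset.range (h+1), ∑ i ∈ Finset.range (s'+1),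
      coef (1-q) k h s s' i * (q / (1-q)^(s+i+2)))
    = if k = h then q^(k+1) / (((k:ℝ)+1) * (1-q)^2) else 0 := by
  set x : ℝ := 1 - q with hx
  have hxpos : 0 < x := by rw [hx]; linarith
  have hxne : x ≠ 0 := ne_of_gt hxpos
  -- Step 1: per-term normal form
  have step1 : ∀ s ∈ Finset.range (k+1), ∀ s' ∈ Finset.range (h+1), ∀ i ∈ Finset.range (s'+1),
      coef x k h s s' i * (q / x^(s+i+2))
      = ((-1:ℝ)^i * (h.choose s' : ℝ) * ((s':ℝ)+1)⁻¹ * x^(s'-i) * q * (x^2)⁻¹)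
        * ((-1:ℝ)^s * (k.choose s : ℝ) * (s.choose (s'-i) : ℝ) * ((s+i+1).choose i : ℝ)) := by
    intro s _ s' _ i hi
    rw [Finset.mem_range] at hi
    obtain ⟨m, rfl⟩ : ∃ m, s' = i + m := ⟨s'-i, by omega⟩
    simp only [Nat.add_sub_cancel_left]
    unfold coef gam
    simp only [Nat.add_sub_cancel_left]
    have hfact : ((s+i+1).factorial : ℝ) = ((s+i+1).choose i : ℝ) * (i.factorial : ℝ) * ((s+1).factorial : ℝ) := by
      have := Nat.choose_mul_factorial_mul_factorial (show i ≤ s+i+1 by omega)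
      have e : s + i + 1 - i = s + 1 := by omega
      rw [e] at this
      exact_mod_cast this.symm
    have hfs' : (((i+m)+1).factorial : ℝ) = (((i:ℝ)+m)+1) * ((i+m).factorial : ℝ) := by
      have : ((i+m)+1).factorial = ((i+m)+1) * (i+m).factorial := Nat.factorial_succ _
      push_cast [this]; ring
    have h2 : (-1:ℝ)^m * (-1:ℝ)^m = 1 := by
      rw [← pow_add]; exact Even.neg_one_pow ⟨m, rfl⟩
    have hne1 : (i.factorial : ℝ) ≠ 0 := by positivity
    have hne2 : ((i+m).factorial : ℝ) ≠ 0 := by positivity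
    have hne3 : ((s+1).factorial : ℝ) ≠ 0 := by positivity
    have hne4 : ((i:ℝ)+m+1) ≠ 0 := by positivity
    have hne5 : (x:ℝ)^(s+i+2) ≠ 0 := pow_ne_zero _ hxne
    rw [hfact, hfs']
    have hcast : ((i+m : ℕ) : ℝ) = (i:ℝ) + m := by push_cast; ring
    rw [hcast]
    field_simp
    ring_nf
    simp only [show ((-1:ℝ))^(m*2) = 1 from by rw [pow_mul, sq]; exact h2, one_mul, mul_one]
  rw [Finset.sum_congr rfl (fun s hs => Finset.sum_congr rfl (fun s' hs' =>
    Finset.sum_congr rfl (fun i hi => step1 s hs s' hs' i hi)))]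
  -- Step 2: swap sums to put s innermost
  rw [Finset.sum_comm]
  have swap2 : ∀ s' ∈ Finset.range (h+1),
      (∑ s ∈ Finset.range (k+1), ∑ i ∈ Finset.range (s'+1),
        ((-1:ℝ)^i * (h.choose s' : ℝ) * ((s':ℝ)+1)⁻¹ * x^(s'-i) * q * (x^2)⁻¹)
          * ((-1:ℝ)^s * (k.choose s : ℝ) * (s.choose (s'-i) : ℝ) * ((s+i+1).choose i : ℝ)))
      = ∑ i ∈ Finset.range (s'+1), ∑ s ∈ Finset.range (k+1),
        ((-1:ℝ)^i * (h.choose s' : ℝ) * ((s':ℝ)+1)⁻¹ * x^(s'-i) * q * (x^2)⁻¹)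
          * ((-1:ℝ)^s * (k.choose s : ℝ) * (s.choose (s'-i) : ℝ) * ((s+i+1).choose i : ℝ)) := by
    intro s' _
    exact Finset.sum_comm
  rw [Finset.sum_congr rfl swap2]
  -- Step 3: evaluate the inner s-sum, then the i-sum
  have step3 : ∀ s' ∈ Finset.range (h+1),
      (∑ i ∈ Finset.range (s'+1), ∑ s ∈ Finset.range (k+1),
        ((-1:ℝ)^i * (h.choose s' : ℝ) * ((s':ℝ)+1)⁻¹ * x^(s'-i) * q * (x^2)⁻¹)
          * ((-1:ℝ)^s * (k.choose s : ℝ) * (s.choose (s'-i) : ℝ) * ((s+i+1).choose i : ℝ)))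
      = ((-1:ℝ)^k * q^(k+1) * (x^2)⁻¹)
        * (if k ≤ s' then
            (-1:ℝ)^s' * (h.choose s' : ℝ) * ((s'+1).choose (s'-k) : ℝ) * ((s':ℝ)+1)⁻¹ else 0) := by
    intro s' _
    have inner : ∀ i ∈ Finset.range (s'+1),
        (∑ s ∈ Finset.range (k+1),
          ((-1:ℝ)^i * (h.choose s' : ℝ) * ((s':ℝ)+1)⁻¹ * x^(s'-i) * q * (x^2)⁻¹)
            * ((-1:ℝ)^s * (k.choose s : ℝ) * (s.choose (s'-i) : ℝ) * ((s+i+1).choose i : ℝ)))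
        = ((-1:ℝ)^i * (h.choose s' : ℝ) * ((s':ℝ)+1)⁻¹ * x^(s'-i) * q * (x^2)⁻¹)
          * (if k ≤ s' then (-1:ℝ)^k * (k.choose (s'-i) : ℝ) * ((s'+1).choose (s'-k) : ℝ) else 0) := by
      intro i hi
      rw [Finset.mem_range] at hi
      have hi' : i ≤ s' := by omega
      rw [← Finset.mul_sum]
      congr 1
      have := sumE k (s'-i) i
      have e1 : (s'-i) + i = s' := by omega
      rw [e1] at this
      exact this
    rw [Finset.sum_congr rfl inner]
    by_cases hks' : k ≤ s'
    · simp only [if_pos hks']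
      have expand : ∀ i ∈ Finset.range (s'+1),
          ((-1:ℝ)^i * (h.choose s' : ℝ) * ((s':ℝ)+1)⁻¹ * x^(s'-i) * q * (x^2)⁻¹)
            * ((-1:ℝ)^k * (k.choose (s'-i) : ℝ) * ((s'+1).choose (s'-k) : ℝ))
          = ((h.choose s' : ℝ) * ((s':ℝ)+1)⁻¹ * q * (x^2)⁻¹ * (-1:ℝ)^k
              * ((s'+1).choose (s'-k) : ℝ))
            * ((-1:ℝ)^i * (k.choose (s'-i) : ℝ) * x^(s'-i)) := by
        intro i _
        ring
      rw [Finset.sum_congr rfl expand, ← Finset.mul_sum]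
      have reflect : (∑ i ∈ Finset.range (s'+1), (-1:ℝ)^i * (k.choose (s'-i) : ℝ) * x^(s'-i))
          = ∑ j ∈ Finset.range (s'+1), (-1:ℝ)^(s'-j) * (k.choose j : ℝ) * x^j := by
        rw [← Finset.sum_range_reflect (fun j => (-1:ℝ)^(s'-j) * (k.choose j : ℝ) * x^j) (s'+1)]
        apply Finset.sum_congr rfl
        intro i hi
        rw [Finset.mem_range] at hi
        have e1 : s' + 1 - 1 - i = s' - i := by omega
        have e2 : s' - (s' - i) = i := by omega
        rw [e1, e2]
      have signfix : (∑ j ∈ Finset.range (s'+1), (-1:ℝ)^(s'-j) * (k.choose j : ℝ) * x^j)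
          = (-1:ℝ)^s' * ∑ j ∈ Finset.range (s'+1), (-1:ℝ)^j * (k.choose j : ℝ) * x^j := by
        rw [Finset.mul_sum]
        apply Finset.sum_congr rfl
        intro j hj
        rw [Finset.mem_range] at hj
        obtain ⟨m, rfl⟩ : ∃ m, s' = j + m := ⟨s'-j, by omega⟩
        simp only [Nat.add_sub_cancel_left]
        have h2 : (-1:ℝ)^j * (-1:ℝ)^j = 1 := by
          rw [← pow_add]; exact Even.neg_one_pow ⟨j, rfl⟩
        rw [pow_add]
        calc (-1:ℝ)^m * (k.choose j : ℝ) * x^j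
            = ((-1:ℝ)^j * (-1:ℝ)^j) * ((-1:ℝ)^m * (k.choose j : ℝ) * x^j) := by rw [h2]; ring
          _ = _ := by ring
      rw [reflect, signfix, binomtrunc x k s' hks']
      have hq' : 1 - x = q := by rw [hx]; ring
      rw [hq']
      ring
    · simp only [if_neg hks']
      simp
  rw [Finset.sum_congr rfl step3, ← Finset.mul_sum, sumH k h]
  rcases eq_or_ne k h with rfl | hne
  · rw [if_pos rfl, if_pos rfl]
    have h2 : (-1:ℝ)^k * (-1:ℝ)^k = 1 := by
      rw [← pow_add]; exact Even.neg_one_pow ⟨k, rfl⟩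
    rw [div_eq_mul_inv]
    calc ((-1:ℝ)^k * q^(k+1) * (x^2)⁻¹) * ((-1:ℝ)^k * ((k:ℝ)+1)⁻¹)
        = ((-1:ℝ)^k * (-1:ℝ)^k) * (q^(k+1) * (((k:ℝ)+1)⁻¹ * (x^2)⁻¹)) := by ring
      _ = q^(k+1) * (((k:ℝ)+1) * x^2)⁻¹ := by rw [h2, one_mul, ← mul_inv]
  · rw [if_neg hne, if_neg hne]
    ring

/-- geometric series against a shifted binomial: `Σ_n C(n+m, m+1) q^n = q/(1-q)^(m+2)`. -/
lemma hasSum_geom_choose (q : ℝ) (hq : |q| < 1) (m : ℕ) :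
    HasSum (fun n : ℕ => ((n+m).choose (m+1) : ℝ) * q^n) (q / (1-q)^(m+2)) := by
  have base := hasSum_choose_mul_geometric_of_norm_lt_one (𝕜 := ℝ) (m+1) (r := q)
    (by simpa using hq)
  have step := base.mul_left q
  have hcomp : ((fun n : ℕ => ((n+m).choose (m+1) : ℝ) * q^n) ∘ Nat.succ)
      = fun n : ℕ => q * (((n+(m+1)).choose (m+1) : ℝ) * q^n) := by
    funext n
    simp only [Function.comp_apply, Nat.succ_eq_add_one]
    have e : n + 1 + m = n + (m+1) := by omega
    rw [e]
    ring
  have hvan : ∀ x : ℕ, x ∉ Set.range Nat.succ →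
      ((x+m).choose (m+1) : ℝ) * q^x = 0 := by
    intro x hx
    have hx0 : x = 0 := by
      cases x with
      | zero => rfl
      | succ n => exact absurd ⟨n, rfl⟩ hx
    subst hx0
    rw [Nat.choose_eq_zero_of_lt (by omega)]
    simp
  have := (Function.Injective.hasSum_iff Nat.succ_injective hvan).mp
    (by rw [hcomp]; exact step)
  convert this using 1
  rw [mul_one_div]

/-- pointwise expansion of the summand -/
lemma pointwise (b : ℝ) (k h : ℕ) (n : ℕ) :
    (n : ℝ) * (b^2)^n * meixner b k n * meixner b h n
      = ∑ s ∈ Finset.range (k+1), ∑ s' ∈ Finset.range (h+1), ∑ i ∈ Finset.range (s'+1),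
          coef (1-b^2) k h s s' i * (((n + (s+i)).choose ((s+i)+1) : ℝ) * (b^2)^n) := by
  unfold meixner
  rw [mul_assoc, Finset.sum_mul_sum, Finset.mul_sum]
  apply Finset.sum_congr rfl
  intro s _
  rw [Finset.mul_sum]
  apply Finset.sum_congr rfl
  intro s' _
  -- expand the second factor using the connection formula
  rw [connection s n s', Finset.sum_div, Finset.mul_sum, Finset.sum_mul, Finset.mul_sum,
    Finset.mul_sum]
  apply Finset.sum_congr rfl
  intro i _
  have hNPR : (n:ℝ) * (∏ t ∈ Finset.Icc 1 s, ((n : ℝ) + t))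
      * (∏ t ∈ Finset.Icc (s+1) (s+i), ((n : ℝ) + t))
      = ((s+i+1).factorial : ℝ) * ((n + s + i).choose (s+i+1) : ℝ) := by
    rw [mul_prod_Icc_eq s n]
    exact prod_shift_eq s n i
  have e : n + (s + i) = n + s + i := by omega
  rw [e]
  unfold coef
  have hne1 : (((s+1).factorial : ℝ)) ≠ 0 := by positivity
  have hne2 : (((s'+1).factorial : ℝ)) ≠ 0 := by positivity
  field_simp
  linear_combination ((k.choose s : ℝ) * (1-b^2)^s * ((h.choose s' : ℝ)
    * (1-b^2)^s') * gam s s' i * (b^2)^n) * hNPR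

end MeixnerAux

/-- Orthonormality of the Meixner polynomials (Appendix 1): for `0 < b < 1` the
series `Σ_{n=1}^∞ n b^{2n} φ^(k)_n φ^(h)_n` converges and equals `δ_{kh}`. -/
theorem meixner_orthonormal (b : ℝ) (hb0 : 0 < b) (hb1 : b < 1) (k h : ℕ) :
    Summable (fun n : ℕ => if 1 ≤ n then
        (n : ℝ) * b ^ (2 * n) * meixnerNorm b k n * meixnerNorm b h n else 0) ∧
    (∑' n : ℕ, if 1 ≤ n then
        (n : ℝ) * b ^ (2 * n) * meixnerNorm b k n * meixnerNorm b h n else 0)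
      = if k = h then 1 else 0 := by
  classical
  have hq0 : (0:ℝ) < b^2 := by positivity
  have hq1 : b^2 < 1 := by nlinarith
  have hqabs : |b^2| < 1 := by rw [abs_of_pos hq0]; exact hq1
  set q : ℝ := b^2 with hqdef
  -- the triple-sum value
  set T : ℝ := ∑ s ∈ Finset.range (k+1), ∑ s' ∈ Finset.range (h+1), ∑ i ∈ Finset.range (s'+1),
      MeixnerAux.coef (1-q) k h s s' i * (q / (1-q)^(s+i+2)) with hT
  have H1 : HasSum (fun n : ℕ => ∑ s ∈ Finset.range (k+1), ∑ s' ∈ Finset.range (h+1),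
      ∑ i ∈ Finset.range (s'+1),
        MeixnerAux.coef (1-q) k h s s' i * (((n + (s+i)).choose ((s+i)+1) : ℝ) * q^n)) T := by
    rw [hT]
    apply hasSum_sum
    intro s _
    apply hasSum_sum
    intro s' _
    apply hasSum_sum
    intro i _
    exact (MeixnerAux.hasSum_geom_choose q hqabs (s+i)).mul_left _
  have H2 : HasSum (fun n : ℕ => (n : ℝ) * q^n * meixner b k n * meixner b h n) T := by
    have hfun : (fun n : ℕ => (n : ℝ) * q^n * meixner b k n * meixner b h n)
        = (fun n : ℕ => ∑ s ∈ Finset.range (k+1), ∑ s' ∈ Finset.range (h+1),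
            ∑ i ∈ Finset.range (s'+1),
              MeixnerAux.coef (1-q) k h s s' i * (((n + (s+i)).choose ((s+i)+1) : ℝ) * q^n)) := by
      funext n
      exact MeixnerAux.pointwise b k h n
    rw [hfun]
    exact H1
  set c : ℝ := ((1 - b^2) * Real.sqrt ((k+1) / b ^ (2*(k+1))))
      * ((1 - b^2) * Real.sqrt ((h+1) / b ^ (2*(h+1)))) with hc
  have hfun2 : (fun n : ℕ => if 1 ≤ n then
      (n : ℝ) * b ^ (2 * n) * meixnerNorm b k n * meixnerNorm b h n else 0)
      = (fun n : ℕ => c * ((n : ℝ) * q^n * meixner b k n * meixner b h n)) := by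
    funext n
    cases n with
    | zero => simp
    | succ n =>
        rw [if_pos (by omega)]
        unfold meixnerNorm
        rw [hc, hqdef, show b ^ (2 * (n+1)) = (b^2)^(n+1) from by rw [pow_mul]]
        ring
  have H3 : HasSum (fun n : ℕ => if 1 ≤ n then
      (n : ℝ) * b ^ (2 * n) * meixnerNorm b k n * meixnerNorm b h n else 0) (c * T) := by
    rw [hfun2]
    exact H2.mul_left c
  refine ⟨H3.summable, ?_⟩
  rw [H3.tsum_eq]
  have hTval : T = if k = h then q^(k+1) / (((k:ℝ)+1) * (1-q)^2) else 0 :=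
    MeixnerAux.Teval q hq0 hq1 k h
  rw [hTval]
  rcases eq_or_ne k h with rfl | hne
  · rw [if_pos rfl, if_pos rfl]
    have hA : (0:ℝ) ≤ ((k:ℝ)+1) / b ^ (2*(k+1)) := by positivity
    have hsq : Real.sqrt (((k:ℝ)+1) / b ^ (2*(k+1))) * Real.sqrt (((k:ℝ)+1) / b ^ (2*(k+1)))
        = ((k:ℝ)+1) / b ^ (2*(k+1)) := Real.mul_self_sqrt hA
    have hbp : b ^ (2*(k+1)) = q^(k+1) := by rw [hqdef, pow_mul]
    have hne1 : (q:ℝ)^(k+1) ≠ 0 := by positivity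
    have hne2 : ((k:ℝ)+1) ≠ 0 := by positivity
    have hne3 : (1-q) ≠ 0 := by
      have : q < 1 := hq1
      intro hcon; rw [sub_eq_zero] at hcon; linarith
    rw [hc]
    have hpush : ((k:ℕ):ℝ) + 1 = ((k:ℝ)+1) := by push_cast; ring
    calc ((1 - b^2) * Real.sqrt ((k+1) / b ^ (2*(k+1))))
          * ((1 - b^2) * Real.sqrt ((k+1) / b ^ (2*(k+1)))) * (q^(k+1) / (((k:ℝ)+1) * (1-q)^2))
        = (Real.sqrt (((k:ℝ)+1) / b ^ (2*(k+1))) * Real.sqrt (((k:ℝ)+1) / b ^ (2*(k+1))))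
          * ((1-b^2)^2 * (q^(k+1) / (((k:ℝ)+1) * (1-q)^2))) := by
          push_cast
          ring
      _ = (((k:ℝ)+1) / q^(k+1)) * ((1-q)^2 * (q^(k+1) / (((k:ℝ)+1) * (1-q)^2))) := by
          rw [hsq, hbp, hqdef]
      _ = 1 := by field_simp
  · rw [if_neg hne, if_neg hne, mul_zero]
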